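/- Let L be the averaging operator with parameter β ∈ [0,1) on the m-regular tree, h : T → ℝ, and f : [0,1] → ℝ continuous with f ≥ g. Under the hypotheses of the comparison principle, the Dirichlet problem L(u) = h on T with lim_{x→z} u(x) = f(ψ(z)) uniformly has at most one bounded solution. -/

import Mathlib

/-- The averaging operator on the `m`-regular tree with parameter `β`. -/
noncomputable def Lop (m : ℕ) (β : ℝ) (u : List (Fin m) → ℝ) (x : List (Fin m)) : ℝ :=
  if x = [] then u [] - (1 / m) * ∑ i : Fin m, u [i]
  else u x - β * u x.dropLast - ((1 - β) / m) * ∑ i : Fin m, u (x ++ [i])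

/-- The boundary coding map `ψ : ∂T → [0,1]` on branches. -/
noncomputable def psiB (m : ℕ) (z : ℕ → Fin m) : ℝ :=
  ∑' k : ℕ, ((z k : ℕ) : ℝ) / (m : ℝ) ^ (k + 1)

/-- The node at level `n` along the branch `z`. -/
def branchNode (m : ℕ) (z : ℕ → Fin m) (n : ℕ) : List (Fin m) :=
  List.ofFn (fun i : Fin n => z i)

/-- `u` attains the boundary datum `f` uniformly along branches. -/
def UnifBoundary (m : ℕ) (u : List (Fin m) → ℝ) (f : ℝ → ℝ) : Prop :=
  ∀ ε > (0 : ℝ), ∃ K : ℕ, ∀ (z : ℕ → Fin m) (n : ℕ), K ≤ n →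
    |u (branchNode m z n) - f (psiB m z)| < ε

lemma Lop_sub (m : ℕ) (β : ℝ) (u₁ u₂ : List (Fin m) → ℝ) (x : List (Fin m)) :
    Lop m β (fun y => u₁ y - u₂ y) x = Lop m β u₁ x - Lop m β u₂ x := by
  unfold Lop
  split_ifs <;> simp [Finset.sum_sub_distrib] <;> ring

lemma key_nonpos (m : ℕ) (hm : 2 ≤ m) (β : ℝ) (hβ0 : 0 ≤ β) (hβ1 : β < 1)
    (w : List (Fin m) → ℝ)
    (heq : ∀ x, Lop m β w x = 0)
    (hbd : ∀ ε > (0:ℝ), ∃ K : ℕ, ∀ (z : ℕ → Fin m) (n : ℕ), K ≤ n →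
      |w (branchNode m z n)| < ε) :
    ∀ x, w x ≤ 0 := by
  haveI : NeZero m := ⟨by omega⟩
  have hm0 : (0:ℝ) < m := by exact_mod_cast Nat.lt_of_lt_of_le Nat.zero_lt_two hm
  have hne : ∀ n : ℕ, (Finset.univ : Finset (Fin n → Fin m)).Nonempty :=
    fun n => ⟨fun _ => ⟨0, by omega⟩, Finset.mem_univ _⟩
  set a : ℕ → ℝ := fun n =>
    (Finset.univ : Finset (Fin n → Fin m)).sup' (hne n) (fun v => w (List.ofFn v)) with ha
  -- every node value is bounded by the level sup
  have hA : ∀ x : List (Fin m), w x ≤ a x.length := by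
    intro x
    have := Finset.le_sup' (s := (Finset.univ : Finset (Fin x.length → Fin m)))
      (fun v => w (List.ofFn v)) (Finset.mem_univ x.get)
    rw [List.ofFn_get] at this; exact this
  have hEx : ∀ n : ℕ, ∃ v : Fin n → Fin m, a n = w (List.ofFn v) := by
    intro n
    obtain ⟨v, -, hv⟩ := Finset.exists_mem_eq_sup' (hne n) (fun v : Fin n → Fin m => w (List.ofFn v))
    exact ⟨v, hv⟩
  -- equations
  have heq0 : w [] = ((m:ℝ))⁻¹ * ∑ i : Fin m, w [i] := by
    have := heq []
    simp [Lop] at this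
    linarith
  have heqr : ∀ x : List (Fin m), x ≠ [] →
      w x = β * w x.dropLast + ((1 - β) / m) * ∑ i : Fin m, w (x ++ [i]) := by
    intro x hx
    have := heq x
    simp only [Lop, if_neg hx] at this
    linarith
  -- sum bound helper
  have hsum : ∀ (n : ℕ) (g : Fin m → List (Fin m)), (∀ i, (g i).length = n) →
      ∑ i : Fin m, w (g i) ≤ m * a n := by
    intro n g hg
    calc ∑ i : Fin m, w (g i) ≤ ∑ _i : Fin m, a n := by
          refine Finset.sum_le_sum fun i _ => ?_
          have := hA (g i); rwa [hg i] at this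
      _ = m * a n := by simp [Finset.sum_const, mul_comm]
  -- base: a 0 ≤ a 1
  have h0 : a 0 = w [] := by
    obtain ⟨v, hv⟩ := hEx 0
    simpa using hv
  have hbase : a 0 ≤ a 1 := by
    rw [h0, heq0]
    have := hsum 1 (fun i => [i]) (fun i => rfl)
    have h2 : ((m:ℝ))⁻¹ * ∑ i : Fin m, w [i] ≤ ((m:ℝ))⁻¹ * (m * a 1) := by
      apply mul_le_mul_of_nonneg_left this (by positivity)
    have h3 : ((m:ℝ))⁻¹ * (m * a 1) = a 1 := by field_simp
    linarith
  -- step inequality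
  have hstep : ∀ n : ℕ, a (n + 1) ≤ β * a n + (1 - β) * a (n + 2) := by
    intro n
    obtain ⟨v, hv⟩ := hEx (n + 1)
    set x : List (Fin m) := List.ofFn v with hxdef
    have hxlen : x.length = n + 1 := by simp [hxdef]
    have hxne : x ≠ [] := by
      intro hcon; rw [hcon] at hxlen; simp at hxlen
    have hdrop : w x.dropLast ≤ a n := by
      have := hA x.dropLast
      rwa [List.length_dropLast, hxlen, Nat.add_sub_cancel] at this
    have hchild : ∑ i : Fin m, w (x ++ [i]) ≤ m * a (n + 2) := by
      apply hsum (n + 2)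
      intro i; simp [hxlen]
    rw [hv, heqr x hxne]
    have h1 : β * w x.dropLast ≤ β * a n := mul_le_mul_of_nonneg_left hdrop hβ0
    have h2 : ((1 - β) / m) * ∑ i : Fin m, w (x ++ [i]) ≤ ((1 - β) / m) * (m * a (n + 2)) := by
      apply mul_le_mul_of_nonneg_left hchild
      exact div_nonneg (by linarith) hm0.le
    have h3 : ((1 - β) / (m:ℝ)) * (m * a (n + 2)) = (1 - β) * a (n + 2) := by
      field_simp
    linarith
  -- monotonicity
  have hmono : ∀ n : ℕ, a n ≤ a (n + 1) := by
    intro n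
    induction n with
    | zero => exact hbase
    | succ k ih =>
        have := hstep k
        nlinarith [mul_le_mul_of_nonneg_left ih hβ0]
  have hmono' : Monotone a := monotone_nat_of_le_succ hmono
  -- a n ≤ 0 for all n
  have hnonpos : ∀ n : ℕ, a n ≤ 0 := by
    by_contra hcon
    push_neg at hcon
    obtain ⟨N, hN⟩ := hcon
    obtain ⟨K, hK⟩ := hbd (a N) hN
    set n := max K N with hn
    obtain ⟨v, hv⟩ := hEx n
    set z : ℕ → Fin m := fun i => if h : i < n then v ⟨i, h⟩ else ⟨0, by omega⟩ with hz
    have hbr : branchNode m z n = List.ofFn v := by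
      unfold branchNode
      congr 1
      funext i
      simp [hz, i.isLt]
    have h1 := hK z n (le_max_left _ _)
    rw [hbr, ← hv] at h1
    have h2 : a N ≤ a n := hmono' (le_max_right _ _)
    have h3 : a n ≤ |a n| := le_abs_self _
    linarith
  intro x
  exact (hA x).trans (hnonpos _)

/-- Uniqueness for the Dirichlet problem: the problem `L(u) = h` with uniform
boundary datum `f ∘ ψ` has at most one bounded solution. -/
theorem stmt_6 (m : ℕ) (hm : 2 ≤ m) (β : ℝ) (hβ0 : 0 ≤ β) (hβ1 : β < 1)
    (h : List (Fin m) → ℝ) (f : ℝ → ℝ) (hf : Continuous f)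
    (u₁ u₂ : List (Fin m) → ℝ) (C₁ C₂ : ℝ)
    (hb₁ : ∀ x, |u₁ x| ≤ C₁) (hb₂ : ∀ x, |u₂ x| ≤ C₂)
    (heq₁ : ∀ x, Lop m β u₁ x = h x) (heq₂ : ∀ x, Lop m β u₂ x = h x)
    (hbd₁ : UnifBoundary m u₁ f) (hbd₂ : UnifBoundary m u₂ f) :
    u₁ = u₂ := by
  have hbdw : ∀ ε > (0:ℝ), ∃ K : ℕ, ∀ (z : ℕ → Fin m) (n : ℕ), K ≤ n →
      |u₁ (branchNode m z n) - u₂ (branchNode m z n)| < ε := by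
    intro ε hε
    obtain ⟨K₁, h₁⟩ := hbd₁ (ε / 2) (by linarith)
    obtain ⟨K₂, h₂⟩ := hbd₂ (ε / 2) (by linarith)
    refine ⟨max K₁ K₂, fun z n hn => ?_⟩
    have a1 := h₁ z n (le_trans (le_max_left _ _) hn)
    have a2 := h₂ z n (le_trans (le_max_right _ _) hn)
    rw [abs_lt] at a1 a2 ⊢
    constructor <;> [linarith [a1.1, a2.2]; linarith [a1.2, a2.1]]
  have k₁ := key_nonpos m hm β hβ0 hβ1 (fun y => u₁ y - u₂ y)
    (fun x => by rw [Lop_sub, heq₁, heq₂]; ring)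
    (fun ε hε => by simpa using hbdw ε hε)
  have k₂ := key_nonpos m hm β hβ0 hβ1 (fun y => u₂ y - u₁ y)
    (fun x => by rw [Lop_sub, heq₁, heq₂]; ring)
    (fun ε hε => by
      obtain ⟨K, hK⟩ := hbdw ε hε
      exact ⟨K, fun z n hn => by simpa [abs_sub_comm] using hK z n hn⟩)
  funext x
  have := k₁ x
  have := k₂ x
  linarith
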